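/- The directional modulus/curvature quantity (1/‖ξ*‖)·γ̂ is translation invariant in the following sense: for y₁, y₂ in the relative interior of F ∩ P(ξ, u), with ξ₁* the unique element of J_{F−y₁}^{−1}(ξ − y₁) and ξ₂* the unique element of J_{F−y₂}^{−1}(ξ − y₂), one has (1/‖ξ₁*‖)·γ̂_{F−y₁}(ξ − y₁, u^j(ξ)) = (1/‖ξ₂*‖)·γ̂_{F−y₂}(ξ − y₂, u^j(ξ)), and moreover ξ₂* = ξ₁*/(1 + ⟨y₁ − y₂, ξ₁*⟩) is collinear with ξ₁*. -/

import Mathlib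

open RealInnerProductSpace Filter Metric Topology

noncomputable section

abbrev Euc (n : ℕ) := EuclideanSpace ℝ (Fin n)

/-- The polar set `F°`. -/
def polarSet {n : ℕ} (F : Set (Euc n)) : Set (Euc n) := {y | ∀ x ∈ F, ⟪x, y⟫ ≤ 1}

/-- The normal cone of convex analysis to `F` at `ξ`. -/
def normalCone {n : ℕ} (F : Set (Euc n)) (ξ : Euc n) : Set (Euc n) :=
  {ζ | ∀ y ∈ F, ⟪y - ξ, ζ⟫ ≤ 0}

/-- The tangent hyperplane to `F` at `ξ`. -/
def tangentHyp {n : ℕ} (F : Set (Euc n)) (ξ : Euc n) : Set (Euc n) :=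
  {v | ∀ ζ ∈ normalCone F ξ, ⟪v, ζ⟫ = 0}

/-- The 2-dimensional plane `P(η, u) = span{∇f(η), u} + η`. -/
def planeP {n : ℕ} (f : Euc n → ℝ) (η u : Euc n) : Set (Euc n) :=
  {y | ∃ a b : ℝ, y = η + a • gradient f η + b • u}

/-- `η* = ∇f(η)/⟨η, ∇f(η)⟩`, the unique element of `N_F(η) ∩ ∂F°`. -/
def etaStar {n : ℕ} (f : Euc n → ℝ) (η : Euc n) : Euc n :=
  (⟪η, gradient f η⟫)⁻¹ • gradient f η

/-- The 2-dimensional modulus of strict convexity `Ĉ_F(r, η, u)`. -/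
def Chat {n : ℕ} (F : Set (Euc n)) (f : Euc n → ℝ) (r : ℝ) (η u : Euc n) : ℝ :=
  sInf {t | ∃ y, y ∈ F ∧ y ∈ planeP f η u ∧ r ≤ ‖η - y‖ ∧ t = ⟪η - y, etaStar f η⟫}

/-- The tangent vector at `η` corresponding to a tangent vector `u` at `ξ`: the
coordinates `j ≠ i` agree with those of `u` and the `i`-th coordinate is determined
by tangency at `η`.  For `u = e_j` this is the tangent basis vector `u^j(η)`. -/
def uAt {n : ℕ} (f : Euc n → ℝ) (i : Fin n) (u : Euc n) (η : Euc n) : Euc n :=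
  ∑ j ∈ Finset.univ.erase i,
    u j • (EuclideanSpace.single j (1:ℝ) -
      (gradient f η j / gradient f η i) • EuclideanSpace.single i (1:ℝ))

/-- The directional lower curvature `γ̂_F(ξ, u(ξ))`, a liminf of the directional modulus
of strict convexity over `r²` as `(r, η) → (0⁺, ξ)`, `η ∈ ∂F`. -/
def gammaDir {n : ℕ} (F : Set (Euc n)) (f : Euc n → ℝ) (i : Fin n) (ξ u : Euc n) : ℝ :=
  Filter.liminf (fun p : ℝ × Euc n => Chat F f p.1 p.2 (uAt f i u p.2) / p.1 ^ 2)
    ((𝓝[>] (0:ℝ)) ×ˢ (𝓝 ξ ⊓ 𝓟 (frontier F)))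

/-- The Hessian bilinear form `⟨∇²f(ξ)u, v⟩`. -/
def hessQ {n : ℕ} (f : Euc n → ℝ) (ξ u v : Euc n) : ℝ := ⟪fderiv ℝ (gradient f) ξ u, v⟫

/-- The modulus of strict convexity of the translated body `F - y` at `η - y` in the
direction `u`, written in terms of points of `F` itself: the dual vector of `η - y`
for `F - y` is `∇f(η)/⟨η - y, ∇f(η)⟩`. -/
def ChatShift {n : ℕ} (F : Set (Euc n)) (f : Euc n → ℝ) (y : Euc n) (r : ℝ)
    (η u : Euc n) : ℝ :=
  sInf {t | ∃ z, z ∈ F ∧ z ∈ planeP f η u ∧ r ≤ ‖η - z‖ ∧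
    t = ⟪η - z, (⟪η - y, gradient f η⟫)⁻¹ • gradient f η⟫}

/-- The directional lower curvature of the translated body `F - y` at `ξ - y`. -/
def gammaShift {n : ℕ} (F : Set (Euc n)) (f : Euc n → ℝ) (y : Euc n) (i : Fin n)
    (ξ u : Euc n) : ℝ :=
  Filter.liminf (fun p : ℝ × Euc n => ChatShift F f y p.1 p.2 (uAt f i u p.2) / p.1 ^ 2)
    ((𝓝[>] (0:ℝ)) ×ˢ (𝓝 ξ ⊓ 𝓟 (frontier F)))


/-! ### Auxiliary lemmas -/

section Aux

open Filter Set Pointwise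

/-- Multiplying by a positive constant commutes with `liminf` over `ℝ`. -/
lemma liminf_const_mul_real {α : Type*} {l : Filter α} (w : α → ℝ) {c : ℝ} (hc : 0 < c) :
    Filter.liminf (fun x => c * w x) l = c * Filter.liminf w l := by
  have hset : { a : ℝ | ∀ᶠ x in l, a ≤ c * w x } = c • { a : ℝ | ∀ᶠ x in l, a ≤ w x } := by
    ext a
    constructor
    · intro ha
      refine ⟨a / c, ?_, by simp only [smul_eq_mul]; field_simp⟩
      filter_upwards [ha] with x hx
      rw [div_le_iff₀' hc]
      exact hx
    · rintro ⟨b, hb, rfl⟩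
      filter_upwards [hb] with x hx
      simpa [smul_eq_mul] using (mul_le_mul_of_nonneg_left hx hc.le)
  rw [Filter.liminf_eq, Filter.liminf_eq, hset, Real.sSup_smul_of_nonneg hc.le, smul_eq_mul]

/-- `liminf (φ * w) = A * liminf w` whenever `φ → A > 0` and `w` is eventually nonnegative. -/
lemma liminf_mul_tendsto {α : Type*} {l : Filter α} [l.NeBot] {w φ : α → ℝ} {A : ℝ} (hA : 0 < A)
    (hw : ∀ᶠ x in l, 0 ≤ w x) (hφ : Filter.Tendsto φ l (𝓝 A)) :
    Filter.liminf (fun x => φ x * w x) l = A * Filter.liminf w l := by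
  have hφ2 : ∀ᶠ x in l, A / 2 ≤ φ x := hφ.eventually (eventually_ge_nhds (by linarith))
  by_cases hT : Filter.Tendsto w l Filter.atTop
  · have h1 : Filter.Tendsto (fun x => φ x * w x) l Filter.atTop := by
      refine tendsto_atTop_mono' l ?_ (Filter.Tendsto.const_mul_atTop
        (by linarith : (0:ℝ) < A/2) hT)
      filter_upwards [hφ2, hw] with x h1 h2
      exact mul_le_mul_of_nonneg_right h1 h2
    have key : ∀ u : α → ℝ, Filter.Tendsto u l Filter.atTop → Filter.liminf u l = 0 := by
      intro u hu
      rw [Filter.liminf_eq]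
      have h2 : { a : ℝ | ∀ᶠ n in l, a ≤ u n } = Set.univ :=
        Set.eq_univ_of_forall fun a => hu.eventually_ge_atTop a
      rw [h2, Real.sSup_univ]
    rw [key _ h1, key _ hT, mul_zero]
  · obtain ⟨b, hb⟩ : ∃ b : ℝ, ∃ᶠ x in l, w x ≤ b := by
      rw [Filter.tendsto_atTop] at hT
      push_neg at hT
      obtain ⟨b, hb⟩ := hT
      exact ⟨b, (Filter.not_eventually.1 hb).mono fun x hx => le_of_lt (not_not.1 hx)⟩
    set b' := max b 0 with hb'
    have hbb : ∃ᶠ x in l, w x ≤ b' := hb.mono fun x hx => hx.trans (le_max_left _ _)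
    have Hcw : Filter.IsCoboundedUnder (· ≥ ·) l w :=
      Filter.IsCoboundedUnder.of_frequently_le hbb
    have hφ3 : ∀ᶠ x in l, φ x ≤ A + 1 := hφ.eventually (eventually_le_nhds (by linarith))
    have Hbφw : Filter.IsBoundedUnder (· ≥ ·) l (fun x => φ x * w x) := by
      refine ⟨0, Filter.eventually_map.2 ?_⟩
      filter_upwards [hφ2, hw] with x h1 h2
      exact mul_nonneg (by linarith) h2
    have Hcφw : Filter.IsCoboundedUnder (· ≥ ·) l (fun x => φ x * w x) := by
      apply Filter.IsCoboundedUnder.of_frequently_le (a := (A+1) * b')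
      apply (hbb.and_eventually (hφ3.and hw)).mono
      rintro x ⟨hx1, hx2, hx3⟩
      calc φ x * w x ≤ (A+1) * w x := mul_le_mul_of_nonneg_right hx2 hx3
        _ ≤ (A+1) * b' := mul_le_mul_of_nonneg_left hx1 (by linarith)
    have Hbcw : ∀ c : ℝ, 0 < c → Filter.IsCoboundedUnder (· ≥ ·) l (fun x => c * w x) := by
      intro c hc
      apply Filter.IsCoboundedUnder.of_frequently_le (a := c * b')
      exact hbb.mono fun x hx => mul_le_mul_of_nonneg_left hx hc.le
    have Hbcw' : ∀ c : ℝ, 0 ≤ c → Filter.IsBoundedUnder (· ≥ ·) l (fun x => c * w x) := by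
      intro c hc
      exact ⟨0, Filter.eventually_map.2 (hw.mono fun x hx => mul_nonneg hc hx)⟩
    set L := Filter.liminf w l with hL
    have hL0 : 0 ≤ L := Filter.le_liminf_of_le Hcw hw
    have main : ∀ ε : ℝ, 0 < ε → ε < A →
        Filter.liminf (fun x => φ x * w x) l ≤ (A + ε) * L ∧
        (A - ε) * L ≤ Filter.liminf (fun x => φ x * w x) l := by
      intro ε hε hεA
      have hev : ∀ᶠ x in l, |φ x - A| < ε := by
        have := Metric.tendsto_nhds.1 hφ ε hε
        simpa [Real.dist_eq] using this
      constructor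
      · calc Filter.liminf (fun x => φ x * w x) l
            ≤ Filter.liminf (fun x => (A + ε) * w x) l := by
              apply Filter.liminf_le_liminf _ Hbφw (Hbcw _ (by linarith))
              filter_upwards [hev, hw] with x h1 h2
              obtain ⟨h1a, h1b⟩ := abs_lt.1 h1
              exact mul_le_mul_of_nonneg_right (by linarith) h2
          _ = (A + ε) * L := liminf_const_mul_real _ (by linarith)
      · calc (A - ε) * L = Filter.liminf (fun x => (A - ε) * w x) l :=
              (liminf_const_mul_real _ (by linarith)).symm
          _ ≤ Filter.liminf (fun x => φ x * w x) l := by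
              apply Filter.liminf_le_liminf _ (Hbcw' _ (by linarith)) Hcφw
              filter_upwards [hev, hw] with x h1 h2
              obtain ⟨h1a, h1b⟩ := abs_lt.1 h1
              exact mul_le_mul_of_nonneg_right (by linarith) h2
    apply le_antisymm
    · apply le_of_forall_pos_le_add
      intro ε' hε'
      set ε := min (A/2) (ε' / (L+1)) with hε
      have hε0 : 0 < ε := lt_min (by linarith) (div_pos hε' (by linarith))
      have hεA : ε < A := lt_of_le_of_lt (min_le_left _ _) (by linarith)
      have h1 := (main ε hε0 hεA).1
      have h2 : ε * L ≤ (ε'/(L+1)) * L :=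
        mul_le_mul_of_nonneg_right (min_le_right _ _) hL0
      have h3 : (ε'/(L+1)) * L ≤ ε' := by
        rw [div_mul_eq_mul_div, div_le_iff₀ (by linarith)]
        nlinarith
      nlinarith
    · apply le_of_forall_pos_le_add
      intro ε' hε'
      set ε := min (A/2) (ε' / (L+1)) with hε
      have hε0 : 0 < ε := lt_min (by linarith) (div_pos hε' (by linarith))
      have hεA : ε < A := lt_of_le_of_lt (min_le_left _ _) (by linarith)
      have h1 := (main ε hε0 hεA).2
      have h2 : ε * L ≤ (ε'/(L+1)) * L :=
        mul_le_mul_of_nonneg_right (min_le_right _ _) hL0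
      have h3 : (ε'/(L+1)) * L ≤ ε' := by
        rw [div_mul_eq_mul_div, div_le_iff₀ (by linarith)]
        nlinarith
      nlinarith

/-- The gradient of a local defining function is an outward normal: at a frontier point where
`f` vanishes and is differentiable, `⟪z - η, ∇f η⟫ ≤ 0` for every `z ∈ F`. -/
lemma support_ineq {n : ℕ} {F : Set (Euc n)} (hFc : Convex ℝ F)
    {f : Euc n → ℝ} (hFf : F ⊆ {x | f x ≤ 0}) {η : Euc n}
    (hdiff : DifferentiableAt ℝ f η) (hfη : f η = 0) (hηF : η ∈ F)
    {z : Euc n} (hz : z ∈ F) : ⟪z - η, gradient f η⟫ ≤ 0 := by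
  have hgrad : ⟪z - η, gradient f η⟫ = fderiv ℝ f η (z - η) := by
    rw [real_inner_comm]
    exact InnerProductSpace.toDual_symm_apply
  rw [hgrad]
  set v := z - η with hv
  set φ : ℝ → ℝ := fun t => f (η + t • v) with hφdef
  have hline : HasDerivAt (fun t : ℝ => η + t • v) v 0 := by
    simpa using ((hasDerivAt_id (0:ℝ)).smul_const v).const_add η
  have hφ : HasDerivAt φ (fderiv ℝ f η v) 0 := by
    have h0 : HasFDerivAt f (fderiv ℝ f η) (η + (0:ℝ) • v) := by
      rw [zero_smul, add_zero]; exact hdiff.hasFDerivAt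
    exact h0.comp_hasDerivAt 0 hline
  have hslope : Filter.Tendsto (slope φ 0) (𝓝[>] 0) (𝓝 (fderiv ℝ f η v)) :=
    (hasDerivAt_iff_tendsto_slope.1 hφ).mono_left
      (nhdsWithin_mono 0 fun x hx => ne_of_gt hx)
  refine le_of_tendsto hslope ?_
  filter_upwards [Ioc_mem_nhdsGT_of_mem (Set.left_mem_Ico.2 one_pos)] with t ht
  have hmem : η + t • v ∈ F := by
    have h2 : (1 - t) • η + t • z ∈ F :=
      hFc hηF hz (by linarith [ht.2]) (le_of_lt ht.1) (by ring)
    have h3 : η + t • v = (1 - t) • η + t • z := by rw [hv]; module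
    rwa [h3]
  have hle : φ t ≤ 0 := hFf hmem
  have hφ0 : φ 0 = 0 := by simpa [hφdef] using hfη
  rw [slope_def_field]
  rw [hφ0, sub_zero, sub_zero]
  exact div_nonpos_of_nonpos_of_nonneg hle ht.1.le

/-- From a relative interior point one can move slightly past it along any chord. -/
lemma extend_beyond {n : ℕ} {S : Set (Euc n)} {y z : Euc n}
    (hy : y ∈ intrinsicInterior ℝ S) (hz : z ∈ S) :
    ∃ s : ℝ, 0 < s ∧ y + s • (y - z) ∈ S := by
  obtain ⟨y', hy', rfl⟩ := (mem_intrinsicInterior).1 hy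
  have hzspan : z ∈ affineSpan ℝ S := subset_affineSpan ℝ S hz
  have hmem : ∀ c : ℝ, c • ((y' : Euc n) - z) + z ∈ affineSpan ℝ S := fun c => by
    have := (affineSpan ℝ S).smul_vsub_vadd_mem c y'.2 hzspan hzspan
    simpa [vsub_eq_sub, vadd_eq_add] using this
  set ψ : ℝ → (affineSpan ℝ S) := fun c => ⟨c • ((y' : Euc n) - z) + z, hmem c⟩ with hψ
  have hψcont : Continuous ψ := by
    apply Continuous.subtype_mk
    continuity
  have hψ1 : ψ 1 = y' := by
    apply Subtype.ext
    simp [hψ]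
  have hopen : IsOpen (ψ ⁻¹' interior (((↑) : (affineSpan ℝ S) → Euc n) ⁻¹' S)) :=
    isOpen_interior.preimage hψcont
  have h1mem : (1:ℝ) ∈ ψ ⁻¹' interior (((↑) : (affineSpan ℝ S) → Euc n) ⁻¹' S) := by
    rw [Set.mem_preimage, hψ1]; exact hy'
  obtain ⟨ε, hε, hball⟩ := Metric.isOpen_iff.1 hopen 1 h1mem
  refine ⟨ε/2, by linarith, ?_⟩
  have h2 : (1 + ε/2) ∈ ψ ⁻¹' interior (((↑) : (affineSpan ℝ S) → Euc n) ⁻¹' S) := by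
    apply hball
    rw [Metric.mem_ball, Real.dist_eq,
      show (1 + ε/2 - 1 : ℝ) = ε/2 by ring, abs_of_pos (by linarith)]
    linarith
  have h3 : (ψ (1 + ε/2) : Euc n) ∈ S :=
    Set.mem_preimage.1 (interior_subset (Set.mem_preimage.1 h2))
  have h4 : (ψ (1 + ε/2) : Euc n) = (y' : Euc n) + (ε/2) • ((y' : Euc n) - z) := by
    show (1 + ε/2) • ((y' : Euc n) - z) + z = (y' : Euc n) + (ε/2) • ((y' : Euc n) - z)
    module
  rwa [h4] at h3

set_option maxHeartbeats 1000000 in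
/-- There is a point of `F` strictly below the tangent hyperplane, in the plane direction
`-∇f(ξ)`. -/
lemma exists_below {n : ℕ} {F : Set (Euc n)} (hF : IsCompact F) (hFc : Convex ℝ F)
    (h0 : (0 : Euc n) ∈ interior F) {ξ : Euc n} (hξ : ξ ∈ frontier F)
    {f : Euc n → ℝ} {δ : ℝ} (hδ : 0 < δ) (hf : ContDiffOn ℝ 2 f (Metric.ball ξ δ))
    (hgr : 0 < ⟪ξ, gradient f ξ⟫)
    (hbd : ∀ x ∈ Metric.ball ξ δ, (x ∈ frontier F ↔ f x = 0)) :
    ∃ t : ℝ, 0 < t ∧ ξ - t • gradient f ξ ∈ F := by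
  classical
  set g := gradient f ξ with hgdef
  have hA : 0 < ⟪g, ξ⟫ := by rwa [real_inner_comm]
  have hgne : g ≠ 0 := fun h => by simp [h] at hA
  have hB : 0 < ‖g‖ := norm_pos_iff.2 hgne
  have hnhds : F ∈ 𝓝 (0 : Euc n) := mem_interior_iff_mem_nhds.1 h0
  have habs : Absorbent ℝ F := absorbent_nhds_zero hnhds
  have hclosed : IsClosed F := hF.isClosed
  obtain ⟨ρ, hρ, hballF⟩ := Metric.mem_nhds_iff.1 hnhds
  have hgauge_le : ∀ v : Euc n, gauge F v ≤ ‖v‖ / ρ := fun v => by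
    have h1 := gauge_mono (absorbent_ball_zero hρ) hballF v
    rwa [gauge_ball hρ.le] at h1
  have hgξ : gauge F ξ = 1 := (gauge_eq_one_iff_mem_frontier hFc hnhds).2 hξ
  have hdiff : DifferentiableAt ℝ f ξ :=
    (hf.contDiffAt (Metric.isOpen_ball.mem_nhds (Metric.mem_ball_self hδ))).differentiableAt
      (by norm_num)
  have hfξ : f ξ = 0 := (hbd ξ (Metric.mem_ball_self hδ)).1 hξ
  set A := ⟪g, ξ⟫ with hAdef
  set ε : ℝ := min (A / (‖ξ‖ + 1)) (‖g‖ / 2) with hεdef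
  have hε0 : 0 < ε := lt_min (div_pos hA (by positivity)) (by positivity)
  have hlittle := Asymptotics.isLittleO_iff.1 hdiff.hasFDerivAt.isLittleO hε0
  obtain ⟨ρε, hρε, hTaylor⟩ := Metric.eventually_nhds_iff.1 hlittle
  set C : ℝ := ‖g‖ * (‖ξ‖ / ρ + 1) with hC
  have hC0 : 0 < C := by positivity
  obtain ⟨t, ht0, httg, htC_δ, htC_ρε⟩ :
      ∃ t : ℝ, 0 < t ∧ t * ‖g‖ ≤ ρ / 2 ∧ t * C < δ ∧ t * C < ρε := by
    refine ⟨min (ρ / (2 * ‖g‖)) (min (δ / (2 * C)) (ρε / (2 * C))), ?_, ?_, ?_, ?_⟩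
    · exact lt_min (by positivity) (lt_min (by positivity) (by positivity))
    · have h1 : min (ρ / (2 * ‖g‖)) (min (δ / (2 * C)) (ρε / (2 * C))) ≤ ρ / (2 * ‖g‖) :=
        min_le_left _ _
      rw [le_div_iff₀ (by positivity)] at h1
      nlinarith [min_le_left (ρ / (2 * ‖g‖)) (min (δ / (2 * C)) (ρε / (2 * C)))]
    · have h1 : min (ρ / (2 * ‖g‖)) (min (δ / (2 * C)) (ρε / (2 * C))) ≤ δ / (2 * C) :=
        le_trans (min_le_right _ _) (min_le_left _ _)
      rw [le_div_iff₀ (by positivity)] at h1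
      nlinarith [lt_min (show (0:ℝ) < ρ / (2 * ‖g‖) by positivity)
        (lt_min (show (0:ℝ) < δ / (2 * C) by positivity)
          (show (0:ℝ) < ρε / (2 * C) by positivity))]
    · have h1 : min (ρ / (2 * ‖g‖)) (min (δ / (2 * C)) (ρε / (2 * C))) ≤ ρε / (2 * C) :=
        le_trans (min_le_right _ _) (min_le_right _ _)
      rw [le_div_iff₀ (by positivity)] at h1
      nlinarith [lt_min (show (0:ℝ) < ρ / (2 * ‖g‖) by positivity)
        (lt_min (show (0:ℝ) < δ / (2 * C) by positivity)
          (show (0:ℝ) < ρε / (2 * C) by positivity))]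
  refine ⟨t, ht0, ?_⟩
  by_contra hzF
  set z : Euc n := ξ - t • g with hz
  have hG1 : 1 < gauge F z := by
    by_contra h
    push_neg at h
    have h1 := (gauge_le_one_iff_mem_closure hFc hnhds).1 h
    rw [hclosed.closure_eq] at h1
    exact hzF h1
  set G : ℝ := gauge F z with hG
  have hG0 : 0 < G := lt_trans one_pos hG1
  have htg : ‖t • g‖ = t * ‖g‖ := by
    rw [norm_smul, Real.norm_eq_abs, abs_of_pos ht0]
  have hGbound : G ≤ 1 + t * ‖g‖ / ρ := by
    have h1 : gauge F z ≤ gauge F ξ + gauge F (-(t • g)) := by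
      have h2 := gauge_add_le hFc habs ξ (-(t • g))
      have h3 : z = ξ + -(t • g) := by rw [hz]; abel
      rw [h3]
      exact h2
    have h2 : gauge F (-(t • g)) ≤ t * ‖g‖ / ρ := by
      have := hgauge_le (-(t • g))
      rwa [norm_neg, htg] at this
    rw [← hG, hgξ] at h1
    linarith
  have hGle : G ≤ 3/2 := by
    have : t * ‖g‖ / ρ ≤ 1/2 := by
      rw [div_le_iff₀ hρ]; linarith
    linarith
  have hGinv_le : G⁻¹ ≤ 1 := by
    rw [inv_le_one_iff₀]; right; exact hG1.le
  have hGinv_ge : 2/3 ≤ G⁻¹ := by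
    have h1 : (3/2 : ℝ)⁻¹ ≤ G⁻¹ := by
      apply inv_anti₀ hG0 hGle
    norm_num at h1
    linarith
  set w : Euc n := G⁻¹ • z with hw
  have hgw : gauge F w = 1 := by
    rw [hw, gauge_smul_of_nonneg (inv_nonneg.2 hG0.le), smul_eq_mul, ← hG,
      inv_mul_cancel₀ hG0.ne']
  have hwfr : w ∈ frontier F := (gauge_eq_one_iff_mem_frontier hFc hnhds).1 hgw
  set s : ℝ := 1 - G⁻¹ with hs
  have hs0 : 0 ≤ s := by rw [hs]; linarith
  clear_value A ε C z G w s
  have hsle : s ≤ t * ‖g‖ / ρ := by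
    have h1 : s = (G - 1) / G := by
      rw [hs]; field_simp
    have h2 : (G - 1) / G ≤ G - 1 := by
      apply div_le_self (by linarith) (by linarith)
    rw [h1]
    linarith
  have hveq : w - ξ = (G⁻¹ - 1) • ξ - (G⁻¹ * t) • g := by
    rw [hw, hz]; module
  have hvnorm : ‖w - ξ‖ ≤ s * ‖ξ‖ + t * ‖g‖ := by
    rw [hveq]
    refine le_trans (norm_sub_le _ _) ?_
    have h1 : ‖(G⁻¹ - 1) • ξ‖ = s * ‖ξ‖ := by
      rw [norm_smul, Real.norm_eq_abs,
        abs_of_nonpos (by linarith [hGinv_le] : G⁻¹ - 1 ≤ 0)]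
      rw [hs]; ring
    have h2 : ‖(G⁻¹ * t) • g‖ ≤ t * ‖g‖ := by
      rw [norm_smul, Real.norm_eq_abs, abs_of_nonneg (by positivity)]
      have : G⁻¹ * t ≤ t := by nlinarith
      nlinarith
    linarith
  have hvC : ‖w - ξ‖ ≤ t * C := by
    have h1 : s * ‖ξ‖ ≤ t * ‖g‖ / ρ * ‖ξ‖ :=
      mul_le_mul_of_nonneg_right hsle (norm_nonneg _)
    have h2 : t * ‖g‖ / ρ * ‖ξ‖ + t * ‖g‖ = t * C := by
      rw [hC]; field_simp
    linarith
  have hwball : w ∈ Metric.ball ξ δ := by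
    rw [Metric.mem_ball, dist_eq_norm]
    linarith [hvC]
  have hfw : f w = 0 := (hbd w hwball).1 hwfr
  have hTay := hTaylor (show dist w ξ < ρε by rw [dist_eq_norm]; linarith [hvC])
  rw [hfw, hfξ] at hTay
  have hinner : fderiv ℝ f ξ (w - ξ) = (G⁻¹ - 1) * A - G⁻¹ * t * ‖g‖^2 := by
    have hgr2 : ∀ v : Euc n, fderiv ℝ f ξ v = ⟪g, v⟫ := fun v =>
      (InnerProductSpace.toDual_symm_apply).symm
    rw [hgr2, hveq, inner_sub_right, real_inner_smul_right, real_inner_smul_right,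
      real_inner_self_eq_norm_sq, ← hAdef]
  have hX : s * A + G⁻¹ * t * ‖g‖^2 ≤ ε * (s * ‖ξ‖ + t * ‖g‖) := by
    have h1 : |G⁻¹ * t * ‖g‖ ^ 2 - (G⁻¹ - 1) * A| ≤ ε * ‖w - ξ‖ := by
      have h0' := hTay
      rw [hinner] at h0'
      simpa [Real.norm_eq_abs] using h0'
    have h2 : G⁻¹ * t * ‖g‖ ^ 2 - (G⁻¹ - 1) * A = s * A + G⁻¹ * t * ‖g‖^2 := by
      rw [hs]; ring
    rw [h2] at h1
    have h3 := le_abs_self (s * A + G⁻¹ * t * ‖g‖^2)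
    have h4 : ε * ‖w - ξ‖ ≤ ε * (s * ‖ξ‖ + t * ‖g‖) :=
      mul_le_mul_of_nonneg_left hvnorm hε0.le
    linarith
  have e1 : ε * ‖ξ‖ ≤ A := by
    have h1 : ε ≤ A / (‖ξ‖ + 1) := by rw [hεdef]; exact min_le_left _ _
    have h2 : ε * ‖ξ‖ ≤ A / (‖ξ‖ + 1) * ‖ξ‖ :=
      mul_le_mul_of_nonneg_right h1 (norm_nonneg _)
    have h3 : A / (‖ξ‖ + 1) * ‖ξ‖ ≤ A := by
      rw [div_mul_eq_mul_div, div_le_iff₀ (by positivity)]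
      nlinarith [norm_nonneg ξ]
    linarith
  have e2 : ε * ‖g‖ ≤ ‖g‖^2 / 2 := by
    have h1 : ε ≤ ‖g‖ / 2 := by rw [hεdef]; exact min_le_right _ _
    nlinarith
  have final1 : G⁻¹ * (t * ‖g‖^2) ≤ (1/2) * (t * ‖g‖^2) := by
    have h1 : s * (ε * ‖ξ‖) ≤ s * A := mul_le_mul_of_nonneg_left e1 hs0
    have h2 : t * (ε * ‖g‖) ≤ t * (‖g‖^2/2) := mul_le_mul_of_nonneg_left e2 ht0.le
    nlinarith [hX]
  have final2 : (2/3 : ℝ) * (t * ‖g‖^2) ≤ (1/2) * (t * ‖g‖^2) := by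
    have := mul_le_mul_of_nonneg_right hGinv_ge (by positivity : (0:ℝ) ≤ t * ‖g‖^2)
    linarith
  nlinarith [mul_pos ht0 (pow_pos hB 2)]

set_option maxHeartbeats 1000000 in
/-- Positivity of `⟪ξ - y, ∇f ξ⟫` for `y` in the relative interior of `F ∩ P`. -/
lemma dpos {n : ℕ} {F : Set (Euc n)} (hF : IsCompact F) (hFc : Convex ℝ F)
    (h0 : (0 : Euc n) ∈ interior F) {ξ : Euc n} (hξ : ξ ∈ frontier F)
    {f : Euc n → ℝ} {δ : ℝ} (hδ : 0 < δ) (hf : ContDiffOn ℝ 2 f (Metric.ball ξ δ))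
    (hFf : F ⊆ {x | f x ≤ 0}) (hgr : 0 < ⟪ξ, gradient f ξ⟫)
    (hbd : ∀ x ∈ Metric.ball ξ δ, (x ∈ frontier F ↔ f x = 0))
    {u y : Euc n} (hy : y ∈ intrinsicInterior ℝ (F ∩ planeP f ξ u)) :
    0 < ⟪ξ - y, gradient f ξ⟫ := by
  set g := gradient f ξ with hgdef
  have hgne : g ≠ 0 := by
    intro h
    rw [h] at hgr
    simp at hgr
  have hBpos : 0 < ‖g‖ := norm_pos_iff.2 hgne
  have hdiff : DifferentiableAt ℝ f ξ :=
    (hf.contDiffAt (Metric.isOpen_ball.mem_nhds (Metric.mem_ball_self hδ))).differentiableAt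
      (by norm_num)
  have hfξ : f ξ = 0 := (hbd ξ (Metric.mem_ball_self hδ)).1 hξ
  have hξF : ξ ∈ F := hF.isClosed.frontier_subset hξ
  have hyF : y ∈ F := (intrinsicInterior_subset hy).1
  have hle : ⟪y - ξ, g⟫ ≤ 0 := support_ineq hFc hFf hdiff hfξ hξF hyF
  have hflip : ⟪ξ - y, g⟫ = -⟪y - ξ, g⟫ := by
    rw [show ξ - y = -(y - ξ) by abel, inner_neg_left]
  rcases hle.lt_or_eq with h | h
  · rw [hflip]; linarith
  · exfalso
    obtain ⟨t, ht0, htF⟩ := exists_below hF hFc h0 hξ hδ hf hgr hbd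
    have hzP : ξ - t • g ∈ planeP f ξ u := ⟨-t, 0, by rw [← hgdef]; module⟩
    obtain ⟨s, hs0, hsS⟩ := extend_beyond hy ⟨htF, hzP⟩
    have hwF : y + s • (y - (ξ - t • g)) ∈ F := hsS.1
    have hineq := support_ineq hFc hFf hdiff hfξ hξF hwF
    rw [← hgdef] at hineq
    have hvexp : (y + s • (y - (ξ - t • g))) - ξ
        = (1 + s) • (y - ξ) + (s * t) • g := by module
    rw [hvexp, inner_add_left, real_inner_smul_left, real_inner_smul_left, h,
      real_inner_self_eq_norm_sq] at hineq
    have hpos2 : 0 < s * t * ‖g‖ ^ 2 := by positivity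
    linarith


/-- The unnormalized directional modulus quotient. -/
def Wfun {n : ℕ} (F : Set (Euc n)) (f : Euc n → ℝ) (i j : Fin n)
    (p : ℝ × Euc n) : ℝ :=
  sInf {t | ∃ z, z ∈ F ∧ z ∈ planeP f p.2 (uAt f i (EuclideanSpace.single j 1) p.2) ∧
      p.1 ≤ ‖p.2 - z‖ ∧ t = ⟪p.2 - z, gradient f p.2⟫} / p.1 ^ 2

lemma ChatShift_div_eq {n : ℕ} (F : Set (Euc n)) (f : Euc n → ℝ) (y : Euc n) (i j : Fin n)
    (p : ℝ × Euc n) (hpos : 0 < ⟪p.2 - y, gradient f p.2⟫) :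
    ChatShift F f y p.1 p.2 (uAt f i (EuclideanSpace.single j 1) p.2) / p.1 ^ 2
      = (⟪p.2 - y, gradient f p.2⟫)⁻¹ * Wfun F f i j p := by
  set c := (⟪p.2 - y, gradient f p.2⟫)⁻¹ with hc
  have hc0 : 0 ≤ c := le_of_lt (inv_pos.2 hpos)
  have hset : {t | ∃ z, z ∈ F ∧ z ∈ planeP f p.2 (uAt f i (EuclideanSpace.single j 1) p.2) ∧
      p.1 ≤ ‖p.2 - z‖ ∧ t = ⟪p.2 - z, c • gradient f p.2⟫}
      = c • {t | ∃ z, z ∈ F ∧ z ∈ planeP f p.2 (uAt f i (EuclideanSpace.single j 1) p.2) ∧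
      p.1 ≤ ‖p.2 - z‖ ∧ t = ⟪p.2 - z, gradient f p.2⟫} := by
    ext x
    simp only [Set.mem_setOf_eq, Set.mem_smul_set, smul_eq_mul]
    constructor
    · rintro ⟨z, h1, h2, h3, rfl⟩
      exact ⟨⟪p.2 - z, gradient f p.2⟫, ⟨z, h1, h2, h3, rfl⟩,
        (real_inner_smul_right _ _ _).symm⟩
    · rintro ⟨x0, ⟨z, h1, h2, h3, rfl⟩, rfl⟩
      exact ⟨z, h1, h2, h3, (real_inner_smul_right _ _ _).symm⟩
  unfold ChatShift Wfun
  rw [hset, Real.sInf_smul_of_nonneg hc0, smul_eq_mul, mul_div_assoc]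

end Aux

/-- Translation invariance of the normalized directional lower curvature: for base points
`y₁, y₂` in the relative interior of `F ∩ P(ξ, u^j(ξ))`, with `ξₖ* = ∇f(ξ)/⟨ξ - yₖ, ∇f(ξ)⟩`
the unique dual vectors of the translated bodies, the quantities `γ̂/‖ξₖ*‖` agree, and
`ξ₂* = ξ₁*/(1 + ⟨y₁ - y₂, ξ₁*⟩)` is collinear with `ξ₁*`. -/
theorem gammaDir_translation_invariant
    {n : ℕ} (hn : 2 ≤ n) (F : Set (Euc n)) (hF : IsCompact F) (hFc : Convex ℝ F)
    (h0 : (0 : Euc n) ∈ interior F) (ξ : Euc n) (hξ : ξ ∈ frontier F)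
    (f : Euc n → ℝ) (δ : ℝ) (hδ : 0 < δ) (hf : ContDiffOn ℝ 2 f (Metric.ball ξ δ))
    (hFf : F ⊆ {x | f x ≤ 0}) (hgr : 0 < ⟪ξ, gradient f ξ⟫)
    (hbd : ∀ x ∈ Metric.ball ξ δ, (x ∈ frontier F ↔ f x = 0))
    (i : Fin n) (hi : gradient f ξ i ≠ 0) (hifirst : ∀ k < i, gradient f ξ k = 0)
    (j : Fin n) (hj : j ≠ i)
    (y₁ y₂ : Euc n)
    (hy₁ : y₁ ∈ intrinsicInterior ℝ (F ∩ planeP f ξ (uAt f i (EuclideanSpace.single j 1) ξ)))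
    (hy₂ : y₂ ∈ intrinsicInterior ℝ (F ∩ planeP f ξ (uAt f i (EuclideanSpace.single j 1) ξ)))
    (ξs₁ ξs₂ : Euc n)
    (hξs₁ : ξs₁ = (⟪ξ - y₁, gradient f ξ⟫)⁻¹ • gradient f ξ)
    (hξs₂ : ξs₂ = (⟪ξ - y₂, gradient f ξ⟫)⁻¹ • gradient f ξ) :
    ‖ξs₁‖⁻¹ * gammaShift F f y₁ i ξ (EuclideanSpace.single j 1) =
        ‖ξs₂‖⁻¹ * gammaShift F f y₂ i ξ (EuclideanSpace.single j 1) ∧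
      ξs₂ = (1 + ⟪y₁ - y₂, ξs₁⟫)⁻¹ • ξs₁ := by
  classical
  have hgne : gradient f ξ ≠ 0 := by
    intro h; rw [h] at hgr; simp at hgr
  have hgpos : 0 < ‖gradient f ξ‖ := norm_pos_iff.2 hgne
  have d1 : 0 < ⟪ξ - y₁, gradient f ξ⟫ := dpos hF hFc h0 hξ hδ hf hFf hgr hbd hy₁
  have d2 : 0 < ⟪ξ - y₂, gradient f ξ⟫ := dpos hF hFc h0 hξ hδ hf hFf hgr hbd hy₂
  have hgradcont : ContinuousAt (gradient f) ξ := by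
    have h1 : ContinuousOn (fderiv ℝ f) (Metric.ball ξ δ) :=
      hf.continuousOn_fderiv_of_isOpen Metric.isOpen_ball (by norm_num)
    have h2 : ContinuousAt (fderiv ℝ f) ξ :=
      h1.continuousAt (Metric.isOpen_ball.mem_nhds (Metric.mem_ball_self hδ))
    exact ((InnerProductSpace.toDual ℝ (Euc n)).symm.continuous.continuousAt).comp h2
  haveI hne2 : (𝓝 ξ ⊓ 𝓟 (frontier F)).NeBot := by
    have h1 : ξ ∈ closure (frontier F) := by
      rw [isClosed_frontier.closure_eq]; exact hξ
    exact mem_closure_iff_nhdsWithin_neBot.1 h1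
  haveI hnel : ((𝓝[>] (0:ℝ)) ×ˢ (𝓝 ξ ⊓ 𝓟 (frontier F))).NeBot :=
    Filter.prod_neBot.2 ⟨inferInstance, hne2⟩
  have hfrball : ∀ᶠ η in 𝓝 ξ ⊓ 𝓟 (frontier F), η ∈ frontier F ∧ η ∈ Metric.ball ξ δ := by
    rw [Filter.eventually_inf_principal]
    filter_upwards [Metric.ball_mem_nhds ξ hδ] with η h1 h2
    exact ⟨h2, h1⟩
  have hWev : ∀ᶠ p : ℝ × Euc n in (𝓝[>] (0:ℝ)) ×ˢ (𝓝 ξ ⊓ 𝓟 (frontier F)),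
      0 ≤ Wfun F f i j p := by
    filter_upwards [Filter.tendsto_snd.eventually hfrball] with p hp
    unfold Wfun
    apply div_nonneg _ (sq_nonneg _)
    apply Real.sInf_nonneg
    rintro x ⟨z, hzF, -, -, rfl⟩
    have hdiffη : DifferentiableAt ℝ f p.2 :=
      (hf.contDiffAt (Metric.isOpen_ball.mem_nhds hp.2)).differentiableAt (by norm_num)
    have h1 := support_ineq hFc hFf hdiffη ((hbd p.2 hp.2).1 hp.1)
      (hF.isClosed.frontier_subset hp.1) hzF
    have h2 : ⟪p.2 - z, gradient f p.2⟫ = -⟪z - p.2, gradient f p.2⟫ := by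
      rw [show p.2 - z = -(z - p.2) by abel, inner_neg_left]
    rw [h2]; linarith
  have key : ∀ y : Euc n, 0 < ⟪ξ - y, gradient f ξ⟫ →
      gammaShift F f y i ξ (EuclideanSpace.single j 1)
        = (⟪ξ - y, gradient f ξ⟫)⁻¹ *
          Filter.liminf (Wfun F f i j) ((𝓝[>] (0:ℝ)) ×ˢ (𝓝 ξ ⊓ 𝓟 (frontier F))) := by
    intro y hd
    have hcont : Filter.Tendsto (fun η => ⟪η - y, gradient f η⟫) (𝓝 ξ)
        (𝓝 (⟪ξ - y, gradient f ξ⟫)) :=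
      (ContinuousAt.inner ((continuous_id.sub continuous_const).continuousAt) hgradcont)
    have hφt : Filter.Tendsto (fun p : ℝ × Euc n => (⟪p.2 - y, gradient f p.2⟫)⁻¹)
        ((𝓝[>] (0:ℝ)) ×ˢ (𝓝 ξ ⊓ 𝓟 (frontier F))) (𝓝 ((⟪ξ - y, gradient f ξ⟫)⁻¹)) :=
      ((hcont.inv₀ hd.ne').comp (Filter.tendsto_snd.mono_right inf_le_left))
    have hpos : ∀ᶠ p : ℝ × Euc n in (𝓝[>] (0:ℝ)) ×ˢ (𝓝 ξ ⊓ 𝓟 (frontier F)),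
        0 < ⟪p.2 - y, gradient f p.2⟫ := by
      exact Filter.tendsto_snd.eventually
        ((hcont.mono_left inf_le_left).eventually (eventually_gt_nhds hd))
    have heq : ∀ᶠ p : ℝ × Euc n in (𝓝[>] (0:ℝ)) ×ˢ (𝓝 ξ ⊓ 𝓟 (frontier F)),
        ChatShift F f y p.1 p.2 (uAt f i (EuclideanSpace.single j 1) p.2) / p.1 ^ 2
          = (⟪p.2 - y, gradient f p.2⟫)⁻¹ * Wfun F f i j p := by
      filter_upwards [hpos] with p hp
      exact ChatShift_div_eq F f y i j p hp
    have h3 : gammaShift F f y i ξ (EuclideanSpace.single j 1)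
        = Filter.liminf (fun p : ℝ × Euc n =>
            (⟪p.2 - y, gradient f p.2⟫)⁻¹ * Wfun F f i j p)
          ((𝓝[>] (0:ℝ)) ×ˢ (𝓝 ξ ⊓ 𝓟 (frontier F))) := Filter.liminf_congr heq
    rw [h3]
    exact liminf_mul_tendsto (inv_pos.2 hd) hWev hφt
  constructor
  · rw [key y₁ d1, key y₂ d2, hξs₁, hξs₂, norm_smul, norm_smul]
    simp only [Real.norm_eq_abs, abs_of_pos (inv_pos.2 d1), abs_of_pos (inv_pos.2 d2)]
    set a1 := ⟪ξ - y₁, gradient f ξ⟫ with ha1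
    set a2 := ⟪ξ - y₂, gradient f ξ⟫ with ha2
    clear_value a1 a2
    field_simp [d1.ne', d2.ne', hgpos.ne']
  · have hinner12 : ⟪y₁ - y₂, (⟪ξ - y₁, gradient f ξ⟫)⁻¹ • gradient f ξ⟫
        = (⟪ξ - y₁, gradient f ξ⟫)⁻¹
          * (⟪ξ - y₂, gradient f ξ⟫ - ⟪ξ - y₁, gradient f ξ⟫) := by
      rw [real_inner_smul_right]
      congr 1
      rw [← inner_sub_left]
      congr 1
      abel
    rw [hξs₂, hξs₁, hinner12]
    set a1 := ⟪ξ - y₁, gradient f ξ⟫ with ha1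
    set a2 := ⟪ξ - y₂, gradient f ξ⟫ with ha2
    clear_value a1 a2
    have hsc : (1 + a1⁻¹ * (a2 - a1))⁻¹ * a1⁻¹ = a2⁻¹ := by
      rw [show 1 + a1⁻¹ * (a2 - a1) = a2 * a1⁻¹ by field_simp; ring]
      rw [mul_inv, inv_inv, mul_assoc, mul_inv_cancel₀ d1.ne', mul_one]
    rw [smul_smul, hsc]
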